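/- Let s > 0, γ ∈ ℂ with real part γ_Re, let b: ℝ → ℝ be a continuous 2π-periodic real-valued function with ∫₀^{2π} b(t')dt' = 0, let B(t) = ∫₀^t b(t')dt', and define Λ(t) = exp(-γ·t/(2π) - s²·t²/(16π²) + (i·s/(4π))·B(t)). Then |Λ|² is integrable on ℝ and ∫_{-∞}^{∞} |Λ(t)|² dt = ∫_{-π}^{π} σ(t)·|Λ(t)|² dt, where σ(t) = ∑_{n∈ℤ} exp(-2n·γ_Re - n·s²·t/(2π) - n²·s²/2) is a convergent positive series defining a positive weight function. -/

import Mathlib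

open Complex Real MeasureTheory Set

lemma aux_summable_abs (A : ℝ) {β : ℝ} (hβ : 0 < β) :
    Summable fun n : ℤ => Real.exp (A * |(n : ℝ)| - β * (n : ℝ) ^ 2) := by
  have h := summable_pow_mul_jacobiTheta₂_term_bound (A / (2 * π)) (T := β / π)
    (by positivity) 0
  refine h.congr fun n => ?_
  rw [pow_zero, one_mul]
  congr 1
  have hπ : (π : ℝ) ≠ 0 := Real.pi_ne_zero
  push_cast
  field_simp
  ring

lemma aux_summable (α : ℝ) {β : ℝ} (hβ : 0 < β) :
    Summable fun n : ℤ => Real.exp (α * (n : ℝ) - β * (n : ℝ) ^ 2) := by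
  refine (aux_summable_abs |α| hβ).of_nonneg_of_le (fun n => (Real.exp_pos _).le)
    (fun n => Real.exp_le_exp.2 ?_)
  have h1 : α * (n : ℝ) ≤ |α * (n : ℝ)| := le_abs_self _
  rw [abs_mul] at h1
  nlinarith [abs_nonneg (n : ℝ)]

noncomputable def auxG (s : ℝ) (γ : ℂ) (t : ℝ) : ℝ :=
  Real.exp (-(γ.re / π) * t - s ^ 2 / (8 * π ^ 2) * t ^ 2)

noncomputable def auxE (s : ℝ) (γ : ℂ) (n : ℤ) (t : ℝ) : ℝ :=
  Real.exp (-2 * n * γ.re - n * s ^ 2 * t / (2 * π) - n ^ 2 * s ^ 2 / 2)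

lemma auxG_cont (s : ℝ) (γ : ℂ) : Continuous (auxG s γ) :=
  Real.continuous_exp.comp (by continuity)

lemma auxE_cont (s : ℝ) (γ : ℂ) (n : ℤ) : Continuous (auxE s γ n) :=
  Real.continuous_exp.comp (by continuity)

lemma auxKey (s : ℝ) (γ : ℂ) (n : ℤ) (t : ℝ) :
    auxG s γ (t + n * (2 * π)) = auxE s γ n t * auxG s γ t := by
  have hπ : (π : ℝ) ≠ 0 := Real.pi_ne_zero
  rw [auxG, auxE, auxG, ← Real.exp_add]
  congr 1
  field_simp
  ring

lemma auxE_summable (s : ℝ) (hs : 0 < s) (γ : ℂ) (t : ℝ) :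
    Summable (fun n : ℤ => auxE s γ n t) := by
  have hπ : (0 : ℝ) < π := Real.pi_pos
  refine (aux_summable (-2 * γ.re - s ^ 2 * t / (2 * π)) (β := s ^ 2 / 2)
    (by positivity)).congr fun n => ?_
  rw [auxE]
  congr 1
  field_simp

lemma auxG_integrable (s : ℝ) (hs : 0 < s) (γ : ℂ) : Integrable (auxG s γ) := by
  have hπ : (0 : ℝ) < π := Real.pi_pos
  have hbneg : ((-(s ^ 2 / (8 * π ^ 2)) : ℝ) : ℂ).re < 0 := by
    rw [Complex.ofReal_re]
    have : (0:ℝ) < s ^ 2 / (8 * π ^ 2) := by positivity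
    linarith
  have h := (integrable_cexp_quadratic' hbneg ((-(γ.re / π) : ℝ) : ℂ) 0).norm
  refine h.congr (Filter.Eventually.of_forall fun x => ?_)
  simp only [Complex.norm_exp, auxG]
  congr 1
  simp [Complex.add_re, Complex.mul_re, ← Complex.ofReal_pow, ← Complex.ofReal_inv,
    ← Complex.ofReal_mul, ← Complex.ofReal_div, ← Complex.ofReal_ofNat]
  ring

noncomputable def auxF (s : ℝ) (γ : ℂ) (n : ℤ) : C(ℝ, ℝ) :=
  ⟨fun x => auxE s γ n x * auxG s γ x, (auxE_cont s γ n).mul (auxG_cont s γ)⟩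

lemma auxF_norm_summable (s : ℝ) (hs : 0 < s) (γ : ℂ) :
    Summable fun n : ℤ =>
      ‖(auxF s γ n).restrict (⟨uIcc (-π) π, isCompact_uIcc⟩ : TopologicalSpace.Compacts ℝ)‖ := by
  have hπ : (0 : ℝ) < π := Real.pi_pos
  have hb2 : Summable fun n : ℤ => Real.exp |γ.re| *
      Real.exp ((2 * |γ.re| + s ^ 2 / 2) * |(n : ℝ)| - s ^ 2 / 2 * (n : ℝ) ^ 2) :=
    (aux_summable_abs (2 * |γ.re| + s ^ 2 / 2) (by positivity)).mul_left _
  refine hb2.of_nonneg_of_le (fun n => norm_nonneg _) fun n => ?_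
  rw [ContinuousMap.norm_le _ (by positivity)]
  rintro ⟨x, hx⟩
  have hx2 : x ∈ uIcc (-π) π := hx
  have hx' : |x| ≤ π := by
    rw [uIcc_of_le (by linarith : (-π : ℝ) ≤ π)] at hx2
    rw [abs_le]; exact ⟨hx2.1, hx2.2⟩
  simp only [ContinuousMap.restrict_apply, auxF, ContinuousMap.coe_mk]
  rw [Real.norm_eq_abs, _root_.abs_of_nonneg (show (0:ℝ) ≤ auxE s γ n x * auxG s γ x from mul_nonneg (Real.exp_pos _).le (Real.exp_pos _).le)]
  rw [mul_comm (Real.exp |γ.re|)]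
  refine mul_le_mul ?_ ?_ ?_ (Real.exp_pos _).le
  · rw [auxE, Real.exp_le_exp]
    have h1 : -2 * (n : ℝ) * γ.re ≤ 2 * |γ.re| * |(n : ℝ)| := by
      have hn := neg_abs_le ((2 : ℝ) * n * γ.re)
      have h2 : |(2 : ℝ) * n * γ.re| = 2 * |(n : ℝ)| * |γ.re| := by
        rw [abs_mul, abs_mul, _root_.abs_two]
      nlinarith
    have h3 : -((n : ℝ)) * x ≤ |(n : ℝ)| * π := by
      have hn := neg_abs_le ((n : ℝ) * x)
      have h4 : |(n : ℝ) * x| ≤ |(n : ℝ)| * π := by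
        rw [abs_mul]
        exact mul_le_mul_of_nonneg_left hx' (abs_nonneg _)
      nlinarith
    have h2 : -((n : ℝ) * s ^ 2 * x / (2 * π)) ≤ s ^ 2 / 2 * |(n : ℝ)| := by
      rw [← neg_div, div_le_iff₀ (by positivity : (0:ℝ) < 2 * π)]
      have h5 := mul_le_mul_of_nonneg_left h3 (sq_nonneg s)
      nlinarith
    linarith
  · rw [auxG, Real.exp_le_exp]
    have h1 : -(γ.re / π) * x ≤ |γ.re| := by
      have h2 : |γ.re / π * x| ≤ |γ.re| := by
        rw [abs_mul, abs_div, abs_of_pos hπ]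
        rw [div_mul_eq_mul_div, div_le_iff₀ hπ]
        exact mul_le_mul_of_nonneg_left hx' (abs_nonneg _)
      have hn := neg_abs_le (γ.re / π * x)
      nlinarith
    have h2 : 0 ≤ s ^ 2 / (8 * π ^ 2) * x ^ 2 := by positivity
    linarith
  · exact (Real.exp_pos _).le

lemma auxMain (s : ℝ) (hs : 0 < s) (γ : ℂ) :
    (∫ t : ℝ, auxG s γ t)
      = ∫ t in (-π : ℝ)..π, (∑' n : ℤ, auxE s γ n t) * auxG s γ t := by
  have hπ : (0 : ℝ) < π := Real.pi_pos
  have hIU := iUnion_Ioc_add_zsmul (a := (-π : ℝ)) (p := 2 * π) (by positivity)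
  have hsum1 : HasSum (fun n : ℤ =>
      ∫ x in Ioc ((-π) + n • (2 * π)) ((-π) + (n + 1) • (2 * π)), auxG s γ x)
      (∫ x : ℝ, auxG s γ x) := by
    have h := hasSum_integral_iUnion (μ := volume) (f := auxG s γ)
      (s := fun n : ℤ => Ioc ((-π) + n • (2 * π)) ((-π) + (n + 1) • (2 * π)))
      (fun n => measurableSet_Ioc)
      (pairwise_disjoint_Ioc_add_zsmul (-π : ℝ) (2 * π))
      (by rw [hIU]; exact (auxG_integrable s hs γ).integrableOn)
    rwa [hIU, setIntegral_univ] at h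
  have hterm : ∀ n : ℤ,
      (∫ x in Ioc ((-π) + n • (2 * π)) ((-π) + (n + 1) • (2 * π)), auxG s γ x)
        = ∫ x in (-π : ℝ)..π, auxE s γ n x * auxG s γ x := by
    intro n
    have hle : (-π : ℝ) + n • (2 * π) ≤ (-π) + (n + 1) • (2 * π) := by
      simp only [zsmul_eq_mul]
      push_cast
      nlinarith
    rw [← intervalIntegral.integral_of_le hle]
    have hend : (-π : ℝ) + (n + 1) • (2 * π) = π + (n : ℝ) * (2 * π) := by
      simp only [zsmul_eq_mul]; push_cast; ring
    have hstart : (-π : ℝ) + n • (2 * π) = -π + (n : ℝ) * (2 * π) := by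
      simp only [zsmul_eq_mul]
    rw [hend, hstart,
      ← intervalIntegral.integral_comp_add_right (a := (-π : ℝ)) (b := π)
        (f := auxG s γ) ((n : ℝ) * (2 * π))]
    exact intervalIntegral.integral_congr fun x _ => auxKey s γ n x
  have hswap : ∑' n : ℤ, ∫ x in (-π : ℝ)..π, auxE s γ n x * auxG s γ x
      = ∫ x in (-π : ℝ)..π, ∑' n : ℤ, auxE s γ n x * auxG s γ x := by
    have h := intervalIntegral.tsum_intervalIntegral_eq_of_summable_norm
      (a := (-π : ℝ)) (b := π) (f := auxF s γ) (auxF_norm_summable s hs γ)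
    simpa [auxF] using h
  calc (∫ t : ℝ, auxG s γ t)
      = ∑' n : ℤ, ∫ x in Ioc ((-π) + n • (2 * π)) ((-π) + (n + 1) • (2 * π)), auxG s γ x :=
        hsum1.tsum_eq.symm
    _ = ∑' n : ℤ, ∫ x in (-π : ℝ)..π, auxE s γ n x * auxG s γ x := tsum_congr hterm
    _ = ∫ x in (-π : ℝ)..π, ∑' n : ℤ, auxE s γ n x * auxG s γ x := hswap
    _ = ∫ t in (-π : ℝ)..π, (∑' n : ℤ, auxE s γ n t) * auxG s γ t := by
        refine intervalIntegral.integral_congr fun x _ => ?_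
        rw [tsum_mul_right]

/-- Resolution of unity for the weak q-deformed coherent states: with
`Λ(t) = exp(-γt/(2π) - s²t²/(16π²) + (is/(4π))B(t))`, `b` a real-valued
continuous `2π`-periodic function of zero mean and `B = ∫₀ᵗ b`, the function
`|Λ|²` is integrable on `ℝ`, the series
`σ(t) = ∑ₙ exp(-2nγ_Re - ns²t/(2π) - n²s²/2)` converges to a positive weight
function, and `∫_ℝ |Λ(t)|² dt = ∫_{-π}^{π} σ(t)|Λ(t)|² dt`. -/
theorem resolution_of_unity
    (s : ℝ) (hs : 0 < s) (γ : ℂ)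
    (b : ℝ → ℝ) (hb : Continuous b)
    (hper : ∀ t : ℝ, b (t + 2 * π) = b t)
    (hmean : (∫ t' in (0 : ℝ)..(2 * π), b t') = 0)
    (B : ℝ → ℝ) (hB : ∀ t : ℝ, B t = ∫ t' in (0 : ℝ)..t, b t')
    (Λ : ℝ → ℂ)
    (hΛ : ∀ t : ℝ, Λ t = Complex.exp (-γ * t / (2 * π)
      - s ^ 2 * t ^ 2 / (16 * π ^ 2) + (I * s / (4 * π)) * B t))
    (σ : ℝ → ℝ)
    (hσ : ∀ t : ℝ, σ t = ∑' n : ℤ,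
      Real.exp (-2 * n * γ.re - n * s ^ 2 * t / (2 * π) - n ^ 2 * s ^ 2 / 2)) :
    (∀ t : ℝ, Summable (fun n : ℤ =>
      Real.exp (-2 * n * γ.re - n * s ^ 2 * t / (2 * π) - n ^ 2 * s ^ 2 / 2))) ∧
    (∀ t : ℝ, 0 < σ t) ∧
    Integrable (fun t : ℝ => ‖Λ t‖ ^ 2) ∧
    (∫ t : ℝ, ‖Λ t‖ ^ 2)
      = ∫ t in (-π : ℝ)..π, σ t * ‖Λ t‖ ^ 2 := by
  have hπ : (0 : ℝ) < π := Real.pi_pos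
  have habs : ∀ t : ℝ, ‖Λ t‖ ^ 2 = auxG s γ t := by
    intro t
    rw [hΛ t, Complex.norm_exp, sq, ← Real.exp_add, auxG]
    congr 1
    have : (-γ * t / (2 * π) - s ^ 2 * t ^ 2 / (16 * π ^ 2)
        + (I * s / (4 * π)) * B t : ℂ).re
        = -γ.re * t / (2 * π) - s ^ 2 * t ^ 2 / (16 * π ^ 2) := by
      simp [Complex.add_re, Complex.sub_re, Complex.div_re, Complex.mul_re, Complex.mul_im,
        Complex.normSq_apply, ← Complex.ofReal_pow]
      field_simp
    rw [this]
    have hπ' : (π : ℝ) ≠ 0 := Real.pi_ne_zero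
    field_simp
    ring
  have hE : ∀ t : ℝ, (fun n : ℤ =>
      Real.exp (-2 * n * γ.re - n * s ^ 2 * t / (2 * π) - n ^ 2 * s ^ 2 / 2))
      = fun n : ℤ => auxE s γ n t := fun t => rfl
  refine ⟨fun t => (hE t) ▸ auxE_summable s hs γ t, fun t => ?_, ?_, ?_⟩
  · rw [hσ t, hE t]
    exact Summable.tsum_pos (auxE_summable s hs γ t) (fun n => (Real.exp_pos _).le) 0 (Real.exp_pos _)
  · have h : (fun t : ℝ => ‖Λ t‖ ^ 2) = auxG s γ := funext habs
    rw [h]; exact auxG_integrable s hs γ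
  · simp only [habs]
    rw [auxMain s hs γ]
    refine intervalIntegral.integral_congr fun x _ => ?_
    rw [hσ x, hE x]
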